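/- For a finite alphabet X of size d and any probability measure μ on X, lim_{δ→0} lim_{N→∞} (1/N) log #Δ(μ;N,δ) = S(μ), where Δ(μ;N,δ) is the set of sequences x ∈ X^N whose type ν_x satisfies |ν_x(t) − μ(t)| < δ for all t ∈ X. -/

import Mathlib

open Finset Real Classical Filter

section Helpers

variable {X : Type*} [Fintype X]

lemma prod_comp_eq_prod_pow {N : ℕ} (x : Fin N → X) (f : X → ℝ) :
    ∏ j, f (x j) = ∏ t, f t ^ ((Finset.univ.filter (fun j : Fin N => x j = t)).card) := by
  classical
  rw [← Finset.prod_fiberwise' Finset.univ x f]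
  refine Finset.prod_congr rfl fun t _ => ?_
  rw [Finset.prod_const]

lemma sum_weight_one {N : ℕ} (q : X → ℝ) (hq : ∑ t, q t = 1) :
    ∑ x : Fin N → X, ∏ j, q (x j) = 1 := by
  classical
  rw [← Fintype.prod_sum (fun _ : Fin N => fun u : X => q u)]
  simp [hq]

lemma variance_le {N : ℕ} (μ : X → ℝ) (hμ0 : ∀ t, 0 ≤ μ t) (hμ1 : ∑ t, μ t = 1) (t : X) :
    ∑ x : Fin N → X, (∏ j, μ (x j)) *
      (((Finset.univ.filter (fun j : Fin N => x j = t)).card : ℝ) - N * μ t)^2 ≤ N := by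
  classical
  have hμt1 : μ t ≤ 1 := by
    rw [← hμ1]; exact Finset.single_le_sum (fun u _ => hμ0 u) (Finset.mem_univ t)
  set φ : X → ℝ := fun u => (if u = t then 1 else 0) - μ t with hφ
  have hφsum : ∑ u, μ u * φ u = 0 := by
    simp only [hφ, mul_sub, Finset.sum_sub_distrib, mul_ite, mul_one, mul_zero]
    rw [Finset.sum_ite_eq' Finset.univ t μ, ← Finset.sum_mul, hμ1]
    simp
  have hφsq : ∀ u, μ u * (φ u)^2 ≤ μ u := by
    intro u
    have h0 := hμ0 u; have h1 := hμ0 t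
    simp only [hφ]
    have h2 : (0:ℝ) ≤ (1 - μ t) * (1 + μ t) := by nlinarith
    by_cases h : u = t <;> simp [h] <;> nlinarith [mul_nonneg h0 h2, mul_nonneg h1 h2]
  -- rewrite the summand
  have hcard : ∀ x : Fin N → X,
      ((Finset.univ.filter (fun j : Fin N => x j = t)).card : ℝ) - N * μ t
        = ∑ j, φ (x j) := by
    intro x
    rw [Finset.card_filter]
    push_cast
    rw [Finset.sum_sub_distrib]
    simp [hφ]
  have key : ∀ j j' : Fin N,
      (∑ x : Fin N → X, (∏ i, μ (x i)) * (φ (x j) * φ (x j')))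
        = ∏ i, ∑ u, μ u * ((if i = j then φ u else 1) * (if i = j' then φ u else 1)) := by
    intro j j'
    rw [Fintype.prod_sum]
    refine Finset.sum_congr rfl fun x _ => ?_
    rw [Finset.prod_mul_distrib, Finset.prod_mul_distrib]
    congr 1
    congr 1 <;> simp [Finset.prod_ite_eq]
  have hdiag : ∀ j : Fin N,
      (∑ x : Fin N → X, (∏ i, μ (x i)) * (φ (x j) * φ (x j))) ≤ 1 := by
    intro j
    rw [key j j]
    have : ∀ i : Fin N, (∑ u, μ u * ((if i = j then φ u else 1) * (if i = j then φ u else 1)))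
        = if i = j then ∑ u, μ u * (φ u)^2 else 1 := by
      intro i
      by_cases h : i = j <;> simp [h, hμ1, sq]
    rw [Finset.prod_congr rfl (fun i _ => this i)]
    rw [Finset.prod_ite_eq' Finset.univ j (fun _ => ∑ u, μ u * (φ u)^2)]
    simp only [Finset.mem_univ, if_true]
    calc ∑ u, μ u * (φ u)^2 ≤ ∑ u, μ u := Finset.sum_le_sum fun u _ => hφsq u
    _ = 1 := hμ1
  have hoff : ∀ j j' : Fin N, j ≠ j' →
      (∑ x : Fin N → X, (∏ i, μ (x i)) * (φ (x j) * φ (x j'))) = 0 := by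
    intro j j' hne
    rw [key j j']
    apply Finset.prod_eq_zero (Finset.mem_univ j)
    simp only [if_pos rfl, if_neg hne]
    simpa [mul_one] using hφsum
  calc ∑ x : Fin N → X, (∏ j, μ (x j)) *
      (((Finset.univ.filter (fun j : Fin N => x j = t)).card : ℝ) - N * μ t)^2
      = ∑ x : Fin N → X, ∑ j, ∑ j', (∏ i, μ (x i)) * (φ (x j) * φ (x j')) := by
        refine Finset.sum_congr rfl fun x _ => ?_
        rw [hcard x, sq, Finset.sum_mul_sum, Finset.mul_sum]
        refine Finset.sum_congr rfl fun j _ => ?_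
        rw [Finset.mul_sum]
    _ = ∑ j, ∑ j' : Fin N, ∑ x : Fin N → X, (∏ i, μ (x i)) * (φ (x j) * φ (x j')) := by
        rw [Finset.sum_comm]
        exact Finset.sum_congr rfl fun j _ => Finset.sum_comm
    _ = ∑ j : Fin N, ∑ x : Fin N → X, (∏ i, μ (x i)) * (φ (x j) * φ (x j)) := by
        refine Finset.sum_congr rfl fun j _ => ?_
        exact Finset.sum_eq_single j (fun j' _ h => hoff j j' (Ne.symm h))
          (fun h => absurd (Finset.mem_univ j) h)
    _ ≤ ∑ j : Fin N, 1 := Finset.sum_le_sum fun j _ => hdiag j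
    _ = N := by simp

lemma typical_weight {N : ℕ} (hN : 1 ≤ N) (μ : X → ℝ) (hμ0 : ∀ t, 0 ≤ μ t)
    (hμ1 : ∑ t, μ t = 1) {δ : ℝ} (hδ : 0 < δ) :
    1 - (Fintype.card X : ℝ) / (N * δ^2) ≤
      ∑ x ∈ Finset.univ.filter (fun x : Fin N → X => ∀ t : X,
        |((Finset.univ.filter (fun j : Fin N => x j = t)).card : ℝ) / N - μ t| < δ),
        ∏ j, μ (x j) := by
  classical
  have hNpos : (0:ℝ) < N := by exact_mod_cast hN
  have hw0 : ∀ x : Fin N → X, 0 ≤ ∏ j, μ (x j) :=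
    fun x => Finset.prod_nonneg fun j _ => hμ0 (x j)
  set c : (Fin N → X) → X → ℝ :=
    fun x t => ((Finset.univ.filter (fun j : Fin N => x j = t)).card : ℝ) with hc
  set P : (Fin N → X) → Prop := fun x => ∀ t : X, |c x t / N - μ t| < δ with hP
  have htot : ∑ x ∈ Finset.univ.filter P, (∏ j, μ (x j))
      + ∑ x ∈ Finset.univ.filter (fun x => ¬ P x), (∏ j, μ (x j)) = 1 := by
    rw [Finset.sum_filter_add_sum_filter_not]
    exact sum_weight_one μ hμ1
  have cheb : ∀ t : X, ∑ x ∈ Finset.univ.filter (fun x => ¬ (|c x t / N - μ t| < δ)),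
      (∏ j, μ (x j)) ≤ 1 / (N * δ^2) := by
    intro t
    have hvar := variance_le (N := N) μ hμ0 hμ1 t
    have hpos2 : (0:ℝ) < (N * δ)^2 := by positivity
    have hmain : (N*δ)^2 * ∑ x ∈ Finset.univ.filter (fun x => ¬ (|c x t / N - μ t| < δ)),
        (∏ j, μ (x j)) ≤ N := by
      rw [Finset.mul_sum]
      calc ∑ x ∈ Finset.univ.filter (fun x => ¬ (|c x t / N - μ t| < δ)),
            (N*δ)^2 * (∏ j, μ (x j))
          ≤ ∑ x ∈ Finset.univ.filter (fun x => ¬ (|c x t / N - μ t| < δ)),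
            (∏ j, μ (x j)) * (c x t - N * μ t)^2 := by
            refine Finset.sum_le_sum fun x hx => ?_
            have hbad : δ ≤ |c x t / N - μ t| := le_of_not_gt (Finset.mem_filter.mp hx).2
            have h1 : (N*δ)^2 ≤ (c x t - N * μ t)^2 := by
              have h2 : δ^2 ≤ (c x t / N - μ t)^2 := by
                rw [← sq_abs (c x t / N - μ t)]
                exact pow_le_pow_left₀ hδ.le hbad 2
              have h3 : (c x t / N - μ t) * N = c x t - N * μ t := by
                field_simp
              calc (N*δ)^2 = δ^2 * N^2 := by ring
                _ ≤ (c x t / N - μ t)^2 * N^2 := by nlinarith [sq_nonneg (N:ℝ)]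
                _ = ((c x t / N - μ t) * N)^2 := by ring
                _ = (c x t - N * μ t)^2 := by rw [h3]
            rw [mul_comm ((N*δ)^2) _]
            exact mul_le_mul_of_nonneg_left h1 (hw0 x)
        _ ≤ ∑ x : Fin N → X, (∏ j, μ (x j)) * (c x t - N * μ t)^2 := by
            refine Finset.sum_le_sum_of_subset_of_nonneg (Finset.filter_subset _ _)
              fun x _ _ => mul_nonneg (hw0 x) (sq_nonneg _)
        _ ≤ N := hvar
    have h2 : ∑ x ∈ Finset.univ.filter (fun x => ¬ (|c x t / N - μ t| < δ)), (∏ j, μ (x j))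
        ≤ (N:ℝ) / (N*δ)^2 := by
      rw [le_div_iff₀ hpos2]; linarith
    calc ∑ x ∈ Finset.univ.filter (fun x => ¬ (|c x t / N - μ t| < δ)), (∏ j, μ (x j))
        ≤ (N:ℝ) / (N*δ)^2 := h2
      _ = 1 / (N * δ^2) := by field_simp
  have hbad : ∑ x ∈ Finset.univ.filter (fun x => ¬ P x), (∏ j, μ (x j))
      ≤ (Fintype.card X : ℝ) / (N * δ^2) := by
    calc ∑ x ∈ Finset.univ.filter (fun x => ¬ P x), (∏ j, μ (x j))
        ≤ ∑ x ∈ Finset.univ.filter (fun x => ¬ P x),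
            ∑ t : X, (if ¬ (|c x t / N - μ t| < δ) then (∏ j, μ (x j)) else 0) := by
          refine Finset.sum_le_sum fun x hx => ?_
          have hx' := (Finset.mem_filter.mp hx).2
          obtain ⟨t₀, ht₀⟩ := not_forall.mp hx'
          have := Finset.single_le_sum
            (f := fun t => if ¬ (|c x t / N - μ t| < δ) then (∏ j, μ (x j)) else 0)
            (fun t _ => by by_cases h : ¬ (|c x t / N - μ t| < δ) <;> simp [h, hw0 x])
            (Finset.mem_univ t₀)
          simpa [ht₀] using this
      _ ≤ ∑ x : Fin N → X,
            ∑ t : X, (if ¬ (|c x t / N - μ t| < δ) then (∏ j, μ (x j)) else 0) := by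
          refine Finset.sum_le_sum_of_subset_of_nonneg (Finset.filter_subset _ _)
            fun x _ _ => Finset.sum_nonneg fun t _ => by
              by_cases h : ¬ (|c x t / N - μ t| < δ) <;> simp [h, hw0 x]
      _ = ∑ t : X, ∑ x : Fin N → X,
            (if ¬ (|c x t / N - μ t| < δ) then (∏ j, μ (x j)) else 0) := Finset.sum_comm
      _ = ∑ t : X, ∑ x ∈ Finset.univ.filter (fun x => ¬ (|c x t / N - μ t| < δ)),
            (∏ j, μ (x j)) := by
          refine Finset.sum_congr rfl fun t _ => (Finset.sum_filter _ _).symm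
      _ ≤ ∑ t : X, 1 / (N * δ^2) := Finset.sum_le_sum fun t _ => cheb t
      _ = (Fintype.card X : ℝ) / (N * δ^2) := by
          rw [Finset.sum_const, Finset.card_univ]; simp [div_eq_mul_inv]
  linarith [htot, hbad]

noncomputable def tcount (X : Type*) [Fintype X] (μ : X → ℝ) (δ : ℝ) (N : ℕ) : ℕ :=
  (Finset.univ.filter (fun x : Fin N → X => ∀ t : X,
    |((Finset.univ.filter (fun j : Fin N => x j = t)).card : ℝ) / N - μ t| < δ)).card

lemma hc_bounds {N : ℕ} {μ : X → ℝ} {δ : ℝ} {x : Fin N → X}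
    (hx : ∀ t : X, |((Finset.univ.filter (fun j : Fin N => x j = t)).card : ℝ) / N - μ t| < δ)
    (t : X) :
    (N:ℝ) * (μ t - δ) ≤ ((Finset.univ.filter (fun j : Fin N => x j = t)).card : ℝ) ∧
    ((Finset.univ.filter (fun j : Fin N => x j = t)).card : ℝ) ≤ (N:ℝ) * (μ t + δ) := by
  rcases Nat.eq_zero_or_pos N with h | h
  · subst h
    have h0 : (Finset.univ.filter (fun j : Fin 0 => x j = t)).card = 0 := by simp
    have := abs_lt.mp (hx t)
    rw [h0] at this ⊢
    simp only [Nat.cast_zero, zero_div, zero_sub, neg_lt, lt_neg] at this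
    constructor <;> simp
  · have hN : (0:ℝ) < N := by exact_mod_cast h
    have h1 := abs_lt.mp (hx t)
    have h2 := h1.1
    have h3 := h1.2
    rw [sub_lt_iff_lt_add, div_lt_iff₀ hN] at h3
    rw [neg_lt, neg_sub, sub_lt_iff_lt_add, ← sub_lt_iff_lt_add', lt_div_iff₀ hN] at h2
    constructor <;> nlinarith

lemma mu_le_one (μ : X → ℝ) (hμ0 : ∀ t, 0 ≤ μ t) (hμ1 : ∑ t, μ t = 1) (t : X) : μ t ≤ 1 := by
  rw [← hμ1]; exact Finset.single_le_sum (fun u _ => hμ0 u) (Finset.mem_univ t)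

lemma count_upper [Nonempty X] {N : ℕ} (μ : X → ℝ) (hμ0 : ∀ t, 0 ≤ μ t) (hμ1 : ∑ t, μ t = 1)
    {δ : ℝ} (hδ : 0 < δ) :
    (tcount X μ δ N : ℝ) ≤
      Real.exp (-(N:ℝ) * ∑ t, (μ t + δ) *
        Real.log ((μ t + δ) / (1 + (Fintype.card X : ℝ) * δ))) := by
  classical
  set d : ℝ := (Fintype.card X : ℝ) with hd
  have hcard1 : (1:ℝ) ≤ d := by
    rw [hd]; exact_mod_cast Fintype.card_pos
  have hden : (0:ℝ) < 1 + d * δ := by nlinarith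
  set q : X → ℝ := fun t => (μ t + δ) / (1 + d * δ) with hq
  have hqpos : ∀ t, 0 < q t := fun t => div_pos (by linarith [hμ0 t]) hden
  have hqsum : ∑ t, q t = 1 := by
    rw [hq]
    rw [← Finset.sum_div]
    rw [Finset.sum_add_distrib, hμ1, Finset.sum_const, Finset.card_univ]
    rw [div_eq_one_iff_eq (ne_of_gt hden)]
    simp [hd, mul_comm]
  have hqle1 : ∀ t, q t ≤ 1 := by
    intro t
    rw [hq, div_le_one hden]
    have := mu_le_one μ hμ0 hμ1 t
    nlinarith
  have hlogq : ∀ t, Real.log (q t) ≤ 0 := fun t => Real.log_nonpos (hqpos t).le (hqle1 t)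
  set Δ := Finset.univ.filter (fun x : Fin N → X => ∀ t : X,
    |((Finset.univ.filter (fun j : Fin N => x j = t)).card : ℝ) / N - μ t| < δ) with hΔ
  set E : ℝ := ∑ t, (μ t + δ) * Real.log (q t) with hE
  have key : ∀ x ∈ Δ, Real.exp ((N:ℝ) * E) ≤ ∏ j, q (x j) := by
    intro x hx
    have hx' := (Finset.mem_filter.mp hx).2
    have regr : ∏ j, q (x j)
        = Real.exp (∑ t, ((Finset.univ.filter (fun j : Fin N => x j = t)).card : ℝ)
            * Real.log (q t)) := by
      rw [prod_comp_eq_prod_pow x q, Real.exp_sum]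
      refine Finset.prod_congr rfl fun t _ => ?_
      rw [Real.exp_nat_mul, Real.exp_log (hqpos t)]
    rw [regr, Real.exp_le_exp, Finset.mul_sum]
    refine Finset.sum_le_sum fun t _ => ?_
    have hcb := (hc_bounds hx' t).2
    calc (N:ℝ) * ((μ t + δ) * Real.log (q t)) = ((N:ℝ) * (μ t + δ)) * Real.log (q t) := by ring
      _ ≤ ((Finset.univ.filter (fun j : Fin N => x j = t)).card : ℝ) * Real.log (q t) :=
          mul_le_mul_of_nonpos_right hcb (hlogq t)
  have main : (tcount X μ δ N : ℝ) * Real.exp ((N:ℝ) * E) ≤ 1 := by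
    calc (tcount X μ δ N : ℝ) * Real.exp ((N:ℝ) * E)
        = ∑ _x ∈ Δ, Real.exp ((N:ℝ) * E) := by
          rw [Finset.sum_const, nsmul_eq_mul]; rfl
      _ ≤ ∑ x ∈ Δ, ∏ j, q (x j) := Finset.sum_le_sum key
      _ ≤ ∑ x : Fin N → X, ∏ j, q (x j) := by
          refine Finset.sum_le_sum_of_subset_of_nonneg (Finset.filter_subset _ _)
            fun x _ _ => Finset.prod_nonneg fun j _ => (hqpos (x j)).le
      _ = 1 := sum_weight_one q hqsum
  have hE' : Real.exp (-(N:ℝ) * E) = 1 / Real.exp ((N:ℝ) * E) := by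
    rw [neg_mul, Real.exp_neg, one_div]
  rw [hE']
  rw [le_div_iff₀ (Real.exp_pos _)]
  exact main

lemma count_lower [Nonempty X] {N : ℕ} (hN : 1 ≤ N) (μ : X → ℝ) (hμ0 : ∀ t, 0 ≤ μ t)
    (hμ1 : ∑ t, μ t = 1) {δ : ℝ} (hδ : 0 < δ) :
    (1 - (Fintype.card X : ℝ) / (N * δ^2)) *
      Real.exp (-(N:ℝ) * ∑ t, (μ t - δ) * Real.log (μ t)) ≤ (tcount X μ δ N : ℝ) := by
  classical
  set E : ℝ := ∑ t, (μ t - δ) * Real.log (μ t) with hE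
  set Δ := Finset.univ.filter (fun x : Fin N → X => ∀ t : X,
    |((Finset.univ.filter (fun j : Fin N => x j = t)).card : ℝ) / N - μ t| < δ) with hΔ
  have key : ∀ x ∈ Δ, ∏ j, μ (x j) ≤ Real.exp ((N:ℝ) * E) := by
    intro x hx
    have hx' := (Finset.mem_filter.mp hx).2
    rw [prod_comp_eq_prod_pow x μ, hE, Finset.mul_sum, Real.exp_sum]
    refine Finset.prod_le_prod (fun t _ => pow_nonneg (hμ0 t) _) fun t _ => ?_
    rcases eq_or_lt_of_le (hμ0 t) with h0 | h0
    · rcases Nat.eq_zero_or_pos ((Finset.univ.filter (fun j : Fin N => x j = t)).card) with hc | hc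
      · rw [hc, pow_zero, ← h0, Real.log_zero]
        simp
      · rw [← h0, zero_pow (by omega)]
        exact (Real.exp_pos _).le
    · have hlog : Real.log (μ t) ≤ 0 := Real.log_nonpos (hμ0 t) (mu_le_one μ hμ0 hμ1 t)
      have hcb := (hc_bounds hx' t).1
      have heq : μ t ^ ((Finset.univ.filter (fun j : Fin N => x j = t)).card)
          = Real.exp (((Finset.univ.filter (fun j : Fin N => x j = t)).card : ℝ)
              * Real.log (μ t)) := by
        rw [Real.exp_nat_mul, Real.exp_log h0]
      rw [heq, Real.exp_le_exp]
      calc ((Finset.univ.filter (fun j : Fin N => x j = t)).card : ℝ) * Real.log (μ t)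
          ≤ ((N:ℝ) * (μ t - δ)) * Real.log (μ t) := mul_le_mul_of_nonpos_right hcb hlog
        _ = (N:ℝ) * ((μ t - δ) * Real.log (μ t)) := by ring
  have main : 1 - (Fintype.card X : ℝ) / (N * δ^2)
      ≤ (tcount X μ δ N : ℝ) * Real.exp ((N:ℝ) * E) := by
    calc 1 - (Fintype.card X : ℝ) / (N * δ^2)
        ≤ ∑ x ∈ Δ, ∏ j, μ (x j) := typical_weight hN μ hμ0 hμ1 hδ
      _ ≤ ∑ _x ∈ Δ, Real.exp ((N:ℝ) * E) := Finset.sum_le_sum key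
      _ = (tcount X μ δ N : ℝ) * Real.exp ((N:ℝ) * E) := by
          rw [Finset.sum_const, nsmul_eq_mul]; rfl
  have hE' : Real.exp (-(N:ℝ) * E) = 1 / Real.exp ((N:ℝ) * E) := by
    rw [neg_mul, Real.exp_neg, one_div]
  rw [hE', mul_one_div, div_le_iff₀ (Real.exp_pos _)]
  exact main

lemma convex_abs {a b m δ : ℝ} {N M : ℕ} (hδ : 0 < δ)
    (hN : |a / N - m| < δ) (hM : |b / M - m| < δ)
    (haN : N = 0 → a = 0) (hbM : M = 0 → b = 0) :
    |(a + b) / ((N : ℝ) + M) - m| < δ := by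
  rcases Nat.eq_zero_or_pos N with h | h
  · rw [haN h, h]
    simpa using hM
  rcases Nat.eq_zero_or_pos M with h' | h'
  · rw [hbM h', h']
    simpa using hN
  have hNp : (0:ℝ) < N := by exact_mod_cast h
  have hMp : (0:ℝ) < M := by exact_mod_cast h'
  have hNM : (0:ℝ) < (N:ℝ) + M := by linarith
  rw [abs_lt] at hN hM ⊢
  obtain ⟨h1, h2⟩ := hN; obtain ⟨h3, h4⟩ := hM
  have A1 : (m - δ) * N < a := (lt_div_iff₀ hNp).mp (by linarith)
  have A2 : a < (m + δ) * N := (div_lt_iff₀ hNp).mp (by linarith)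
  have A3 : (m - δ) * M < b := (lt_div_iff₀ hMp).mp (by linarith)
  have A4 : b < (m + δ) * M := (div_lt_iff₀ hMp).mp (by linarith)
  constructor
  · have : (m - δ) * ((N:ℝ) + M) < a + b := by nlinarith
    have := (lt_div_iff₀ hNM).mpr this
    linarith
  · have : a + b < (m + δ) * ((N:ℝ) + M) := by nlinarith
    have := (div_lt_iff₀ hNM).mpr this
    linarith

lemma count_super (μ : X → ℝ) {δ : ℝ} (hδ : 0 < δ) (N M : ℕ) :
    tcount X μ δ N * tcount X μ δ M ≤ tcount X μ δ (N + M) := by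
  classical
  have hadd : ∀ (x : Fin N → X) (y : Fin M → X) (t : X),
      (Finset.univ.filter (fun j : Fin (N+M) => Fin.append x y j = t)).card
        = (Finset.univ.filter (fun j : Fin N => x j = t)).card
          + (Finset.univ.filter (fun j : Fin M => y j = t)).card := by
    intro x y t
    simp only [Finset.card_filter]
    rw [Fin.sum_univ_add]
    congr 1
    · exact Finset.sum_congr rfl fun i _ => by rw [Fin.append_left]
    · exact Finset.sum_congr rfl fun i _ => by rw [Fin.append_right]
  unfold tcount
  rw [← Finset.card_product]
  apply Finset.card_le_card_of_injOn (fun p => Fin.append p.1 p.2)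
  · intro p hp
    rw [Finset.mem_coe, Finset.mem_product, Finset.mem_filter, Finset.mem_filter] at hp
    rw [Finset.mem_coe, Finset.mem_filter]
    refine ⟨Finset.mem_univ _, fun t => ?_⟩
    rw [hadd p.1 p.2 t]
    push_cast
    exact convex_abs hδ (hp.1.2 t) (hp.2.2 t)
      (fun h => by subst h; simp)
      (fun h => by subst h; simp)
  · intro p hp q hq hpq
    have h1 : p.1 = q.1 := by
      funext i
      have := congrFun hpq (Fin.castAdd M i)
      simpa [Fin.append_left] using this
    have h2 : p.2 = q.2 := by
      funext i
      have := congrFun hpq (Fin.natAdd N i)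
      simpa [Fin.append_right] using this
    exact Prod.ext h1 h2

lemma fekete_aux (a : ℕ → ℝ) (N₁ : ℕ) (hN₁ : 1 ≤ N₁) (C : ℝ)
    (hsuper : ∀ m n, N₁ ≤ m → N₁ ≤ n → a m + a n ≤ a (m + n))
    (hpos : ∀ n, N₁ ≤ n → 0 ≤ a n)
    (hbd : ∀ n, N₁ ≤ n → a n ≤ n * C) :
    Tendsto (fun n => a n / n) atTop
      (nhds (sSup ((fun n => a n / n) '' Set.Ici N₁))) := by
  set T : Set ℝ := (fun n => a n / n) '' Set.Ici N₁ with hT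
  have hCnn : 0 ≤ C := by
    have h1 := hpos N₁ le_rfl
    have h2 := hbd N₁ le_rfl
    have : (0:ℝ) < N₁ := by exact_mod_cast hN₁
    nlinarith
  have hmem : ∀ n, N₁ ≤ n → a n / n ∈ T := fun n hn => ⟨n, hn, rfl⟩
  have hne : T.Nonempty := ⟨a N₁ / N₁, hmem N₁ le_rfl⟩
  have hub : ∀ y ∈ T, y ≤ C := by
    rintro y ⟨n, hn, rfl⟩
    have hnp : (0:ℝ) < n := by
      have : (1:ℕ) ≤ n := le_trans hN₁ hn
      exact_mod_cast this
    rw [div_le_iff₀ hnp]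
    calc a n ≤ n * C := hbd n hn
      _ = C * n := by ring
  have hbdd : BddAbove T := ⟨C, hub⟩
  set L := sSup T with hL
  have hLC : L ≤ C := csSup_le hne hub
  have hLub : ∀ n, N₁ ≤ n → a n / n ≤ L := fun n hn => le_csSup hbdd (hmem n hn)
  rw [Metric.tendsto_atTop]
  intro ε hε
  -- choose k with a k / k close to L
  obtain ⟨y, hyT, hy⟩ := exists_lt_of_lt_csSup hne (by linarith : L - ε/2 < L)
  obtain ⟨k, hk, rfl⟩ := hyT
  have hkp : (0:ℝ) < k := by
    have : (1:ℕ) ≤ k := le_trans hN₁ hk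
    exact_mod_cast this
  have hkp' : 0 < k := by exact_mod_cast hkp
  -- chain inequality
  have chain : ∀ (q r : ℕ), N₁ ≤ r → (q : ℝ) * a k + a r ≤ a (q * k + r) := by
    intro q
    induction q with
    | zero => intro r hr; simp
    | succ q ih =>
      intro r hr
      have h1 := ih r hr
      have h2 : a k + a (q * k + r) ≤ a (k + (q * k + r)) :=
        hsuper k (q * k + r) hk (le_trans hr (Nat.le_add_left _ _))
      have h3 : (q + 1) * k + r = k + (q * k + r) := by ring
      rw [h3]
      push_cast
      linarith
  -- choose threshold
  obtain ⟨N₂, hN₂⟩ := exists_nat_gt (max ((N₁ + k : ℕ) : ℝ) (2 * C * (N₁ + k) / ε))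
  refine ⟨N₂, fun n hn => ?_⟩
  have hnN2 : (N₂ : ℝ) ≤ n := by exact_mod_cast hn
  have hnk : ((N₁ + k : ℕ) : ℝ) < n := lt_of_le_of_lt (le_max_left _ _) (lt_of_lt_of_le hN₂ hnN2)
  have hnk' : N₁ + k ≤ n := by exact_mod_cast hnk.le
  have hnn : (0:ℝ) < n := lt_of_le_of_lt (by positivity) hnk
  have hnN₁ : N₁ ≤ n := le_trans (Nat.le_add_right _ _) hnk'
  -- decompose n = q*k + r
  obtain ⟨q, r, hqkr, hrN₁, hrle⟩ : ∃ q r : ℕ, q * k + r = n ∧ N₁ ≤ r ∧ r ≤ N₁ + k := by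
    refine ⟨(n - N₁) / k, N₁ + (n - N₁) % k, ?_, Nat.le_add_right _ _, ?_⟩
    · have hdm := Nat.div_add_mod (n - N₁) k
      have hcm : (n - N₁) / k * k = k * ((n - N₁) / k) := Nat.mul_comm _ _
      omega
    · have := Nat.mod_lt (n - N₁) hkp'
      omega
  have hchain := chain q r hrN₁
  rw [hqkr] at hchain
  have har : 0 ≤ a r := hpos r hrN₁
  -- lower bound on a n / n
  have hlow : L - ε < a n / n := by
    have hak0 : 0 ≤ a k := hpos k hk
    have hakC : a k ≤ k * C := hbd k hk
    set β := a k / k with hβ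
    have hqk : (q : ℝ) * k = (n : ℝ) - r := by
      have h1 : (q * k : ℕ) = n - r := by omega
      have h2 : ((q * k : ℕ) : ℝ) = ((n - r : ℕ) : ℝ) := by rw [h1]
      push_cast [Nat.cast_sub (by omega : r ≤ n)] at h2
      push_cast
      linarith
    have key : β * ((n : ℝ) - r) ≤ a n := by
      have he : β * ((n:ℝ) - r) = (q : ℝ) * a k := by
        rw [← hqk, hβ]; field_simp
      rw [he]
      linarith
    have hrn : (r : ℝ) ≤ (N₁ : ℝ) + k := by exact_mod_cast hrle
    have hakk : L - ε/2 < β := hy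
    have hakkC : β ≤ C := by
      rw [hβ, div_le_iff₀ hkp]; linarith [hakC]
    have hakknn : 0 ≤ β := div_nonneg hak0 hkp.le
    have hβr : β * r ≤ C * ((N₁:ℝ) + k) :=
      mul_le_mul hakkC hrn (Nat.cast_nonneg r) hCnn
    have step1 : β - (C * ((N₁:ℝ) + k)) / n ≤ a n / n := by
      have e1 : (β * ((n:ℝ) - r)) / n ≤ a n / n := by
        exact div_le_div_of_nonneg_right key hnn.le
      have e2 : (β * ((n:ℝ) - r)) / n = β - (β * r) / n := by
        field_simp
      have e3 : (β * r) / n ≤ (C * ((N₁:ℝ) + k)) / n :=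
        div_le_div_of_nonneg_right hβr hnn.le
      rw [e2] at e1
      linarith
    have step2 : C * ((N₁:ℝ) + k) / n < ε/2 := by
      rw [div_lt_iff₀ hnn]
      have h1 : 2 * C * ((N₁:ℝ) + k) / ε < N₂ :=
        lt_of_le_of_lt (le_max_right _ _) hN₂
      have h2 : 2 * C * ((N₁:ℝ) + k) < (N₂:ℝ) * ε := (div_lt_iff₀ hε).mp h1
      nlinarith
    linarith
  have hup : a n / n ≤ L := hLub n hnN₁
  rw [Real.dist_eq, abs_lt]
  constructor <;> linarith

end Helpers

theorem typical_set_exponential_rate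
    (X : Type*) [Fintype X] [Nonempty X]
    (μ : X → ℝ) (hμ0 : ∀ t, 0 ≤ μ t) (hμ1 : ∑ t, μ t = 1) :
    ∃ L : ℝ → ℝ,
      (∀ δ : ℝ, 0 < δ →
        Tendsto
          (fun N : ℕ => (1 / (N : ℝ)) *
            Real.log
              ((Finset.univ.filter
                  (fun x : Fin N → X => ∀ t : X,
                    |((Finset.univ.filter (fun j : Fin N => x j = t)).card : ℝ) / N
                      - μ t| < δ)).card : ℝ))
          atTop (nhds (L δ))) ∧
      Tendsto L (nhdsWithin 0 (Set.Ioi 0))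
        (nhds (-∑ t, μ t * Real.log (μ t))) := by
  classical
  set d : ℝ := (Fintype.card X : ℝ) with hd
  have hd1 : (1:ℝ) ≤ d := by
    rw [hd]; exact_mod_cast Fintype.card_pos
  set N₁ : ℝ → ℕ := fun δ => ⌈2 * d / δ^2⌉₊ + 1 with hN₁
  set a : ℝ → ℕ → ℝ := fun δ n => Real.log (tcount X μ δ n) with ha
  set L : ℝ → ℝ := fun δ => sSup ((fun n => a δ n / n) '' Set.Ici (N₁ δ)) with hL
  -- basic facts for fixed δ > 0
  have hhalf : ∀ δ : ℝ, 0 < δ → ∀ n : ℕ, N₁ δ ≤ n → d / (n * δ^2) ≤ 1/2 := by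
    intro δ hδ n hn
    simp only [hN₁] at hn
    have h1 : (⌈2 * d / δ^2⌉₊ : ℝ) < n := by
      have : ⌈2 * d / δ^2⌉₊ < n := by omega
      exact_mod_cast this
    have h2 : 2 * d / δ^2 < n := lt_of_le_of_lt (Nat.le_ceil _) h1
    have hδ2 : (0:ℝ) < δ^2 := by positivity
    have h3 : 2 * d < n * δ^2 := by
      rw [div_lt_iff₀ hδ2] at h2
      linarith
    have hn0 : (0:ℝ) < n * δ^2 := by nlinarith
    rw [div_le_iff₀ hn0]
    linarith
  have hcpos : ∀ δ : ℝ, 0 < δ → ∀ n : ℕ, N₁ δ ≤ n → 1 ≤ tcount X μ δ n := by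
    intro δ hδ n hn
    have hn1 : 1 ≤ n := by simp only [hN₁] at hn; omega
    have h1 := count_lower (X := X) (by exact_mod_cast hn1) μ hμ0 hμ1 hδ
    have h2 := hhalf δ hδ n hn
    have h3 : (0:ℝ) < (tcount X μ δ n : ℝ) := by
      have hexp := Real.exp_pos (-(n:ℝ) * ∑ t, (μ t - δ) * Real.log (μ t))
      nlinarith
    have h4 : tcount X μ δ n ≠ 0 := by
      intro h
      rw [h] at h3
      simp at h3
    exact Nat.one_le_iff_ne_zero.mpr h4
  -- main tendsto for fixed δ
  have main : ∀ δ : ℝ, 0 < δ → Tendsto (fun n => a δ n / n) atTop (nhds (L δ)) := by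
    intro δ hδ
    apply fekete_aux (a δ) (N₁ δ) (by simp [hN₁]) (Real.log d)
    · intro m n hm hn
      have h1 := hcpos δ hδ m hm
      have h2 := hcpos δ hδ n hn
      have hs := count_super μ hδ m n
      have h1' : (0:ℝ) < (tcount X μ δ m : ℝ) := by exact_mod_cast h1
      have h2' : (0:ℝ) < (tcount X μ δ n : ℝ) := by exact_mod_cast h2
      simp only [ha]
      rw [← Real.log_mul h1'.ne' h2'.ne']
      apply Real.log_le_log (by positivity)
      exact_mod_cast hs
    · intro n hn
      exact Real.log_nonneg (by exact_mod_cast hcpos δ hδ n hn)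
    · intro n hn
      have h1 : tcount X μ δ n ≤ Fintype.card X ^ n := by
        have h2 : tcount X μ δ n ≤ Fintype.card (Fin n → X) := by
          unfold tcount
          exact le_trans (Finset.card_filter_le _ _) (le_of_eq Finset.card_univ)
        rwa [Fintype.card_fun, Fintype.card_fin] at h2
      have h3 : (0:ℝ) < (tcount X μ δ n : ℝ) := by exact_mod_cast hcpos δ hδ n hn
      have h4 : a δ n ≤ Real.log ((Fintype.card X : ℝ) ^ n) := by
        apply Real.log_le_log h3
        exact_mod_cast h1
      rw [Real.log_pow] at h4
      exact h4
  -- lower bound on L δ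
  have hlb : ∀ δ : ℝ, 0 < δ → (-∑ t, (μ t - δ) * Real.log (μ t)) ≤ L δ := by
    intro δ hδ
    set E : ℝ := ∑ t, (μ t - δ) * Real.log (μ t) with hE
    have hg : Tendsto (fun n : ℕ => Real.log (1 - d / (n * δ^2)) / n + (-E)) atTop
        (nhds (-E)) := by
      have hA : Tendsto (fun n : ℕ => d / ((n:ℝ) * δ^2)) atTop (nhds 0) := by
        have heq : ∀ n : ℕ, d / ((n:ℝ) * δ^2) = (d / δ^2) / n := by
          intro n
          rw [div_div]
          ring_nf
        rw [funext heq]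
        exact tendsto_const_div_atTop_nhds_zero_nat _
      have hB : Tendsto (fun n : ℕ => 1 - d / ((n:ℝ) * δ^2)) atTop (nhds 1) := by
        have := tendsto_const_nhds (x := (1:ℝ)) (f := atTop (α := ℕ)) |>.sub hA
        simpa using this
      have hC : Tendsto (fun n : ℕ => Real.log (1 - d / ((n:ℝ) * δ^2))) atTop (nhds 0) := by
        have := (Real.continuousAt_log one_ne_zero).tendsto.comp hB
        simpa [Real.log_one, Function.comp_def] using this
      have hD : Tendsto (fun n : ℕ => Real.log (1 - d / ((n:ℝ) * δ^2)) / n) atTop (nhds 0) := by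
        have := hC.mul tendsto_one_div_atTop_nhds_zero_nat
        simp only [mul_zero] at this
        refine this.congr fun n => ?_
        rw [mul_one_div]
      have := hD.add (tendsto_const_nhds (x := -E) (f := atTop (α := ℕ)))
      simpa using this
    have hfg : (fun n : ℕ => Real.log (1 - d / (n * δ^2)) / n + (-E)) ≤ᶠ[atTop]
        (fun n => a δ n / n) := by
      filter_upwards [eventually_ge_atTop (N₁ δ)] with n hn
      have hn1 : 1 ≤ n := by simp only [hN₁] at hn; omega
      have hnR : (0:ℝ) < n := by exact_mod_cast hn1
      have hhn := hhalf δ hδ n hn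
      have hfac : (0:ℝ) < 1 - d / (n * δ^2) := by linarith
      have hcl := count_lower (X := X) (by exact_mod_cast hn1) μ hμ0 hμ1 hδ
      have hlog : Real.log ((1 - d / (n * δ^2)) * Real.exp (-(n:ℝ) * E)) ≤ a δ n := by
        apply Real.log_le_log (by positivity)
        exact hcl
      rw [Real.log_mul hfac.ne' (Real.exp_ne_zero _), Real.log_exp] at hlog
      have hdiv : (Real.log (1 - d / (n * δ^2)) + -(n:ℝ) * E) / n ≤ a δ n / n :=
        div_le_div_of_nonneg_right hlog hnR.le
      have heq : (Real.log (1 - d / (n * δ^2)) + -(n:ℝ) * E) / n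
          = Real.log (1 - d / (n * δ^2)) / n + (-E) := by
        field_simp
      rw [heq] at hdiv
      exact hdiv
    exact le_of_tendsto_of_tendsto hg (main δ hδ) hfg
  -- upper bound on L δ
  have hub : ∀ δ : ℝ, 0 < δ →
      L δ ≤ -∑ t, (μ t + δ) * Real.log ((μ t + δ) / (1 + d * δ)) := by
    intro δ hδ
    apply le_of_tendsto (main δ hδ)
    filter_upwards [eventually_ge_atTop (N₁ δ)] with n hn
    have hn1 : 1 ≤ n := by simp only [hN₁] at hn; omega
    have hnR : (0:ℝ) < n := by exact_mod_cast hn1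
    have h1 := count_upper (X := X) (N := n) μ hμ0 hμ1 hδ
    have hpos : (0:ℝ) < (tcount X μ δ n : ℝ) := by exact_mod_cast hcpos δ hδ n hn
    have h2 : a δ n ≤ -(n:ℝ) * ∑ t, (μ t + δ) * Real.log ((μ t + δ) / (1 + d * δ)) := by
      have h3 := Real.log_le_log hpos h1
      rwa [Real.log_exp] at h3
    rw [div_le_iff₀ hnR]
    calc a δ n ≤ -(n:ℝ) * ∑ t, (μ t + δ) * Real.log ((μ t + δ) / (1 + d * δ)) := h2
      _ = (-∑ t, (μ t + δ) * Real.log ((μ t + δ) / (1 + d * δ))) * n := by ring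
  refine ⟨L, ?_, ?_⟩
  · intro δ hδ
    refine (main δ hδ).congr fun n => ?_
    show a δ n / n = _
    rw [ha]
    unfold tcount
    rw [div_eq_inv_mul, ← one_div]
  · -- squeeze
    have hlow_t : Tendsto (fun δ : ℝ => -∑ t, (μ t - δ) * Real.log (μ t))
        (nhdsWithin 0 (Set.Ioi 0)) (nhds (-∑ t, μ t * Real.log (μ t))) := by
      have hc : Continuous fun δ : ℝ => -∑ t, (μ t - δ) * Real.log (μ t) := by
        apply Continuous.neg
        apply continuous_finset_sum
        intro t _
        exact (continuous_const.sub continuous_id).mul continuous_const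
      have h := hc.tendsto 0
      have hval : -∑ t, (μ t - 0) * Real.log (μ t) = -∑ t, μ t * Real.log (μ t) := by
        simp
      rw [hval] at h
      exact h.mono_left nhdsWithin_le_nhds
    have hup_t : Tendsto (fun δ : ℝ => -∑ t, (μ t + δ) * Real.log ((μ t + δ) / (1 + d * δ)))
        (nhdsWithin 0 (Set.Ioi 0)) (nhds (-∑ t, μ t * Real.log (μ t))) := by
      have heq : (fun δ : ℝ => -∑ t, (μ t + δ) * Real.log ((μ t + δ) / (1 + d * δ)))
          =ᶠ[nhdsWithin 0 (Set.Ioi 0)]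
          (fun δ : ℝ => (-∑ t, (μ t + δ) * Real.log (μ t + δ))
            + (1 + d * δ) * Real.log (1 + d * δ)) := by
        filter_upwards [self_mem_nhdsWithin] with δ hδ
        have hδ' : (0:ℝ) < δ := hδ
        have h1 : ∀ t : X, (0:ℝ) < μ t + δ := fun t => by linarith [hμ0 t]
        have h2 : (0:ℝ) < 1 + d * δ := by nlinarith
        have h3 : ∀ t : X, Real.log ((μ t + δ) / (1 + d * δ))
            = Real.log (μ t + δ) - Real.log (1 + d * δ) :=
          fun t => Real.log_div (h1 t).ne' h2.ne'
        have h4 : ∑ t, (μ t + δ) * Real.log ((μ t + δ) / (1 + d * δ))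
            = ∑ t, ((μ t + δ) * Real.log (μ t + δ) - (μ t + δ) * Real.log (1 + d * δ)) := by
          refine Finset.sum_congr rfl fun t _ => ?_
          rw [h3 t]
          ring
        have h5 : ∑ t, (μ t + δ) = 1 + d * δ := by
          rw [Finset.sum_add_distrib, hμ1, Finset.sum_const, Finset.card_univ]
          rw [hd]
          simp [mul_comm]
        rw [h4, Finset.sum_sub_distrib, ← Finset.sum_mul, h5]
        ring
      rw [tendsto_congr' heq]
      have hc1 : Tendsto (fun δ : ℝ => -∑ t, (μ t + δ) * Real.log (μ t + δ)) (nhds 0)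
          (nhds (-∑ t, μ t * Real.log (μ t))) := by
        have hc : Continuous fun δ : ℝ => -∑ t, (μ t + δ) * Real.log (μ t + δ) := by
          apply Continuous.neg
          apply continuous_finset_sum
          intro t _
          exact Real.continuous_mul_log.comp (continuous_const.add continuous_id)
        have h := hc.tendsto 0
        have hval : -∑ t, (μ t + 0) * Real.log (μ t + 0) = -∑ t, μ t * Real.log (μ t) := by
          simp
        rwa [hval] at h
      have hc2 : Tendsto (fun δ : ℝ => (1 + d * δ) * Real.log (1 + d * δ)) (nhds 0)
          (nhds 0) := by
        have hc : Continuous fun δ : ℝ => (1 + d * δ) * Real.log (1 + d * δ) :=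
          Real.continuous_mul_log.comp (continuous_const.add (continuous_const.mul continuous_id))
        have h := hc.tendsto 0
        have hval : (1 + d * 0) * Real.log (1 + d * 0) = 0 := by simp
        rwa [hval] at h
      have h := hc1.add hc2
      rw [add_zero] at h
      exact h.mono_left nhdsWithin_le_nhds
    refine tendsto_of_tendsto_of_tendsto_of_le_of_le' hlow_t hup_t ?_ ?_
    · exact eventually_mem_nhdsWithin.mono fun δ hδ => hlb δ hδ
    · exact eventually_mem_nhdsWithin.mono fun δ hδ => hub δ hδ
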